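/- Let H be a real Hilbert space, f : H → ℝ strongly quasiconvex with value γ > 0 with minimizer x*, let c > 0 and (c_k) a sequence of reals with c_k ≥ c for all k, and let (x^k) be a sequence in H with x^{k+1} ∈ Prox_{c_k f}(x^k) for all k ∈ ℕ. Then f(x^k) converges to f(x*) = min f as k → ∞. -/

import Mathlib

open Filter

set_option maxHeartbeats 1000000 in
/-- The function values along the proximal point algorithm for a
strongly quasiconvex function converge to the minimum. -/
theorem ppa_function_value_convergence
    {H : Type*} [NormedAddCommGroup H] [InnerProductSpace ℝ H] [CompleteSpace H]
    (f : H → ℝ) (γ : ℝ) (hγ : 0 < γ)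
    (hf : ∀ x y : H, ∀ t ∈ Set.Icc (0 : ℝ) 1,
      f ((1 - t) • x + t • y) ≤ max (f x) (f y) - t * (1 - t) * (γ / 2) * ‖x - y‖ ^ 2)
    (xs : H) (hxs : ∀ y : H, f xs ≤ f y)
    (c : ℝ) (hc : 0 < c) (ck : ℕ → ℝ) (hck : ∀ k, c ≤ ck k)
    (x : ℕ → H)
    (hx : ∀ k : ℕ, ∀ y : H,
      f (x (k + 1)) + (1 / (2 * ck k)) * ‖x (k + 1) - x k‖ ^ 2
        ≤ f y + (1 / (2 * ck k)) * ‖y - x k‖ ^ 2) :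
    Filter.Tendsto (fun k => f (x k)) Filter.atTop (nhds (f xs)) := by
  have hckpos : ∀ k, 0 < ck k := fun k => lt_of_lt_of_le hc (hck k)
  set d : ℕ → ℝ := fun k => (1 / (2 * ck k)) * ‖x (k + 1) - x k‖ ^ 2 with hd
  have hdnonneg : ∀ k, 0 ≤ d k := by
    intro k
    have := hckpos k
    exact mul_nonneg (by positivity) (by positivity)
  -- function values decrease by at least d k
  have hstep : ∀ k, f (x (k + 1)) + d k ≤ f (x k) := by
    intro k
    have hz : ‖x k - x k‖ ^ 2 = (0:ℝ) := by simp
    have h := hx k (x k)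
    rw [hz, mul_zero, add_zero] at h
    exact h
  -- partial sums of d bounded
  have hsum : ∀ n, ∑ i ∈ Finset.range n, d i ≤ f (x 0) - f xs := by
    intro n
    calc ∑ i ∈ Finset.range n, d i
        ≤ ∑ i ∈ Finset.range n, (f (x i) - f (x (i + 1))) :=
          Finset.sum_le_sum fun i _ => by linarith [hstep i]
      _ = f (x 0) - f (x n) := Finset.sum_range_sub' (fun i => f (x i)) n
      _ ≤ f (x 0) - f xs := by linarith [hxs (x n)]
  have hdsum : Summable d := summable_of_sum_range_le hdnonneg hsum
  have hd0 : Tendsto d atTop (nhds 0) := hdsum.tendsto_atTop_zero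
  -- key inequality from strong quasiconvexity
  have key : ∀ k, γ / 2 * ‖xs - x (k + 1)‖ ^ 2 * ck k
      ≤ (inner ℝ (x (k + 1) - x k) (xs - x (k + 1)) : ℝ) := by
    intro k
    set u := x (k + 1) - x k with hu
    set v := xs - x (k + 1) with hv
    have hD : 0 < ck k := hckpos k
    have hckne : ck k ≠ 0 := hD.ne'
    set A : ℝ := γ / 2 * ‖v‖ ^ 2 * ck k with hA
    set I : ℝ := (inner ℝ u v : ℝ) with hI
    set V : ℝ := ‖v‖ ^ 2 with hV
    have hVnn : 0 ≤ V := by positivity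
    have hAnn : 0 ≤ A := by positivity
    have main : ∀ t : ℝ, 0 < t → t ≤ 1 → A ≤ I + t * (A + V / 2) := by
      intro t ht0 ht1
      set y := (1 - t) • x (k + 1) + t • xs with hy
      have h1 := hf (x (k + 1)) xs t ⟨ht0.le, ht1⟩
      rw [max_eq_left (hxs _)] at h1
      have h2 := hx k y
      have hyd : y - x k = u + t • v := by
        rw [hy, hu, hv]
        module
      have hnorm : ‖y - x k‖ ^ 2 = ‖u‖ ^ 2 + 2 * t * I + t ^ 2 * V := by
        rw [hyd, norm_add_sq_real, real_inner_smul_right, norm_smul,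
          Real.norm_eq_abs, abs_of_pos ht0, mul_pow, hI, hV]
        ring
      rw [hnorm] at h2
      have hvv : ‖x (k + 1) - xs‖ = ‖v‖ := by rw [hv, norm_sub_rev]
      rw [hvv, ← hy, ← hV] at h1
      rw [← hu] at h2
      -- combine h1 and h2
      have hcomb : t * (1 - t) * (γ / 2) * V ≤ (1 / (2 * ck k)) * (2 * t * I + t ^ 2 * V) := by
        linarith [h1, h2]
      have hckmul : ck k * (1 / (2 * ck k)) = 1 / 2 := by field_simp
      have h5 : t * ((1 - t) * A) ≤ t * (I + t * (V / 2)) := by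
        have := mul_le_mul_of_nonneg_left hcomb hD.le
        calc t * ((1 - t) * A) = ck k * (t * (1 - t) * (γ / 2) * V) := by rw [hA, hV]; ring
          _ ≤ ck k * ((1 / (2 * ck k)) * (2 * t * I + t ^ 2 * V)) := this
          _ = (ck k * (1 / (2 * ck k))) * (2 * t * I + t ^ 2 * V) := by ring
          _ = (1 / 2) * (2 * t * I + t ^ 2 * V) := by rw [hckmul]
          _ = t * (I + t * (V / 2)) := by ring
      have h6 : (1 - t) * A ≤ I + t * (V / 2) := le_of_mul_le_mul_left h5 ht0
      nlinarith [h6]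
    -- let t → 0
    refine le_of_forall_pos_le_add ?_
    intro ε hε
    set C : ℝ := A + V / 2 with hC
    have hCnn : 0 ≤ C := by positivity
    have hC1 : 0 < C + 1 := by linarith
    set t : ℝ := min 1 (ε / (C + 1)) with ht
    have ht0 : 0 < t := lt_min one_pos (div_pos hε hC1)
    have ht1 : t ≤ 1 := min_le_left _ _
    have h7 := main t ht0 ht1
    have h8 : t * C ≤ ε := by
      calc t * C ≤ (ε / (C + 1)) * C :=
            mul_le_mul_of_nonneg_right (min_le_right _ _) hCnn
        _ ≤ ε := by rw [div_mul_eq_mul_div, div_le_iff₀ hC1]; nlinarith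
    linarith
  -- deduce ‖xs - x (k+1)‖² ≤ K * d k
  set s : ℕ → ℝ := fun k => ‖xs - x (k + 1)‖ ^ 2 with hs
  have hsbound : ∀ k, s k ≤ 8 / (γ ^ 2 * c) * d k := by
    intro k
    have hD := hckpos k
    set N : ℝ := ‖xs - x (k + 1)‖ with hN
    set M : ℝ := ‖x (k + 1) - x k‖ with hM
    have hNnn : 0 ≤ N := norm_nonneg _
    have hMnn : 0 ≤ M := norm_nonneg _
    have hcs : (inner ℝ (x (k + 1) - x k) (xs - x (k + 1)) : ℝ) ≤ M * N :=
      real_inner_le_norm _ _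
    have hkey : γ / 2 * N ^ 2 * ck k ≤ M * N := le_trans (key k) hcs
    rcases eq_or_lt_of_le hNnn with h0 | hNpos
    · have : N = 0 := h0.symm
      simp only [hs, hd]
      rw [← hN, this]
      have : (0:ℝ) ≤ 8 / (γ ^ 2 * c) * (1 / (2 * ck k) * ‖x (k + 1) - x k‖ ^ 2) := by
        positivity
      simpa using this
    · have P : γ * ck k * N ≤ 2 * M := by
        have h9 : (γ / 2 * N * ck k) * N ≤ M * N := by nlinarith [hkey]
        have := le_of_mul_le_mul_right h9 hNpos
        linarith
      have Q : γ ^ 2 * c * ck k * N ^ 2 ≤ 4 * M ^ 2 := by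
        have hsq : (γ * ck k * N) ^ 2 ≤ (2 * M) ^ 2 := by
          have hnn : 0 ≤ γ * ck k * N := by positivity
          nlinarith [P, hnn]
        nlinarith [hck k, hc, sq_nonneg N, sq_nonneg (γ * N), hD]
      have hpos : (0:ℝ) < γ ^ 2 * c * ck k := by positivity
      have hrw : 8 / (γ ^ 2 * c) * (1 / (2 * ck k) * M ^ 2) = (4 * M ^ 2) / (γ ^ 2 * c * ck k) := by
        field_simp
        ring
      have goal2 : N ^ 2 * (γ ^ 2 * c * ck k) ≤ 4 * M ^ 2 := by rw [mul_comm]; exact Q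
      calc s k = N ^ 2 := rfl
        _ ≤ (4 * M ^ 2) / (γ ^ 2 * c * ck k) := (le_div_iff₀ hpos).2 goal2
        _ = 8 / (γ ^ 2 * c) * (1 / (2 * ck k) * M ^ 2) := hrw.symm
        _ = 8 / (γ ^ 2 * c) * d k := by rw [hM]
  have hsnonneg : ∀ k, 0 ≤ s k := fun k => by positivity
  have hs0 : Tendsto s atTop (nhds 0) := by
    have hK : Tendsto (fun k => 8 / (γ ^ 2 * c) * d k) atTop (nhds (8 / (γ ^ 2 * c) * 0)) :=
      hd0.const_mul _
    rw [mul_zero] at hK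
    exact squeeze_zero hsnonneg hsbound hK
  -- upper bound for f (x (k+2))
  have hupper : ∀ k, f (x (k + 2)) ≤ f xs + 1 / (2 * c) * s k := by
    intro k
    have h2 := hx (k + 1) xs
    have hD := hckpos (k + 1)
    have hle : 1 / (2 * ck (k + 1)) ≤ 1 / (2 * c) := by
      apply one_div_le_one_div_of_le (by linarith)
      linarith [hck (k + 1)]
    have hnn : (0:ℝ) ≤ ‖x (k + 1 + 1) - x (k + 1)‖ ^ 2 := by positivity
    have hnn2 : (0:ℝ) ≤ 1 / (2 * ck (k + 1)) := by positivity
    have : f (x (k + 2)) ≤ f xs + 1 / (2 * ck (k + 1)) * ‖xs - x (k + 1)‖ ^ 2 := by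
      have := hx (k + 1) xs
      nlinarith [this, mul_nonneg hnn2 hnn]
    calc f (x (k + 2)) ≤ f xs + 1 / (2 * ck (k + 1)) * ‖xs - x (k + 1)‖ ^ 2 := this
      _ ≤ f xs + 1 / (2 * c) * ‖xs - x (k + 1)‖ ^ 2 := by
          have := mul_le_mul_of_nonneg_right hle (by positivity : (0:ℝ) ≤ ‖xs - x (k + 1)‖ ^ 2)
          linarith
      _ = f xs + 1 / (2 * c) * s k := rfl
  -- squeeze
  have hub : Tendsto (fun k => f xs + 1 / (2 * c) * s k) atTop (nhds (f xs)) := by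
    have : Tendsto (fun k => 1 / (2 * c) * s k) atTop (nhds (1 / (2 * c) * 0)) :=
      hs0.const_mul _
    rw [mul_zero] at this
    simpa using (tendsto_const_nhds (x := f xs) (f := atTop)).add this
  have hshift : Tendsto (fun k => f (x (k + 2))) atTop (nhds (f xs)) := by
    refine tendsto_of_tendsto_of_tendsto_of_le_of_le tendsto_const_nhds hub ?_ ?_
    · intro k; exact hxs _
    · intro k; exact hupper k
  exact (Filter.tendsto_add_atTop_iff_nat 2).mp hshift
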